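/- Let G be a group, G' ≤ G a subgroup, and N a group with a left G-action by group automorphisms, acting on the right on G/G' with g·((hG')·n) = (ghG')·(g·n) for all g, h ∈ G, n ∈ N, such that the orbit map β : N → G/G', n ↦ (1G')·n, is bijective. Let V ≤ N be a G-stable subgroup and U := {u ∈ G | uG' ∈ β(V)} (a subgroup of G containing G'). Then the composition of β with the natural projection pr_U : G/G' → G/U is constant on each left coset nV of V in N, and the induced map on the left coset space N/V → G/U is a bijection. -/
import Mathlib


/-- With `G'`, `N`, the compatible right action of `N` on `G ⧸ G'` with bijective orbit map
`β`, a `G`-stable subgroup `V ≤ N` and `U = {u | uG' ∈ β(V)}` (a subgroup containing `G'`),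
the composite `pr_U ∘ β : N → G ⧸ U` is constant on left cosets of `V` and induces a
bijection `N ⧸ V ≃ G ⧸ U`. -/
theorem quotient_bijection_of_stable (G : Type) [Group G] (G' : Subgroup G)
    (N : Type) [Group N] [MulDistribMulAction G N]
    (act : G ⧸ G' → N → G ⧸ G')
    (h_one : ∀ x : G ⧸ G', act x 1 = x)
    (h_mul : ∀ (x : G ⧸ G') (n m : N), act (act x n) m = act x (n * m))
    (h_compat : ∀ (g h : G) (n : N), g • act (↑h) n = act (↑(g * h)) (g • n))
    (hβ : Function.Bijective fun n : N => act ((1 : G) : G ⧸ G') n)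
    (V : Subgroup N) (hV : ∀ g : G, ∀ v ∈ V, g • v ∈ V)
    (U : Subgroup G)
    (hU : ∀ u : G, u ∈ U ↔
      (↑u : G ⧸ G') ∈ (fun n : N => act ((1 : G) : G ⧸ G') n) '' (V : Set N))
    (hG'U : G' ≤ U) :
    (∀ n : N, ∀ v ∈ V,
        Subgroup.quotientMapOfLE hG'U
            (act ((1 : G) : G ⧸ G') (n * v)) =
          Subgroup.quotientMapOfLE hG'U
            (act ((1 : G) : G ⧸ G') n)) ∧
      ∃ f : N ⧸ V → G ⧸ U,
        (∀ n : N,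
          f ↑n =
            Subgroup.quotientMapOfLE hG'U
              (act ((1 : G) : G ⧸ G') n)) ∧
        Function.Bijective f := by
  -- auxiliary: action of `g` on cosets
  have hsmul : ∀ (g h : G), g • ((h : G ⧸ G')) = ((g * h : G) : G ⧸ G') := fun g h => rfl
  -- key: for v ∈ V, `act (↑g) v = ↑(g*u)` for some `u ∈ U`
  have key : ∀ (g : G) (v : N), v ∈ V →
      Subgroup.quotientMapOfLE hG'U (act (↑g) v) = ((g : G) : G ⧸ U) := by
    intro g v hv
    have h1 : act ((1 : G) : G ⧸ G') (g⁻¹ • v) ∈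
        (fun n : N => act ((1 : G) : G ⧸ G') n) '' (V : Set N) :=
      ⟨g⁻¹ • v, hV g⁻¹ v hv, rfl⟩
    obtain ⟨u, hu⟩ := QuotientGroup.mk_surjective (act ((1 : G) : G ⧸ G') (g⁻¹ • v))
    have huU : u ∈ U := (hU u).mpr (hu ▸ h1)
    have h2 : act ((g : G) : G ⧸ G') v = ((g * u : G) : G ⧸ G') := by
      have := h_compat g 1 (g⁻¹ • v)
      rw [smul_inv_smul, mul_one] at this
      rw [← this, ← hu]; rfl
    rw [h2, Subgroup.quotientMapOfLE_apply_mk]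
    exact QuotientGroup.mk_mul_of_mem g huU
  have const : ∀ n : N, ∀ v ∈ V,
      Subgroup.quotientMapOfLE hG'U (act ((1 : G) : G ⧸ G') (n * v)) =
        Subgroup.quotientMapOfLE hG'U (act ((1 : G) : G ⧸ G') n) := by
    intro n v hv
    obtain ⟨g, hg⟩ := QuotientGroup.mk_surjective (act ((1 : G) : G ⧸ G') n)
    rw [← h_mul, ← hg, key g v hv, Subgroup.quotientMapOfLE_apply_mk]
  refine ⟨const, ?_⟩
  refine ⟨Quotient.lift (fun n => Subgroup.quotientMapOfLE hG'U (act ((1 : G) : G ⧸ G') n))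
    ?_, fun n => rfl, ?_, ?_⟩
  · intro a b hab
    have hv : a⁻¹ * b ∈ V := QuotientGroup.leftRel_apply.mp hab
    have := const a (a⁻¹ * b) hv
    rw [mul_inv_cancel_left] at this
    exact this.symm
  · -- injective
    intro x y
    induction x using Quotient.inductionOn with | h n =>
    induction y using Quotient.inductionOn with | h m =>
    intro hxy
    simp only [Quotient.lift_mk] at hxy
    obtain ⟨g, hg⟩ := QuotientGroup.mk_surjective (act ((1 : G) : G ⧸ G') n)
    obtain ⟨h, hh⟩ := QuotientGroup.mk_surjective (act ((1 : G) : G ⧸ G') m)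
    rw [← hg, ← hh, Subgroup.quotientMapOfLE_apply_mk, Subgroup.quotientMapOfLE_apply_mk] at hxy
    have huU : g⁻¹ * h ∈ U := QuotientGroup.eq.mp hxy
    obtain ⟨v, hvV, hv⟩ := (hU (g⁻¹ * h)).mp huU
    -- act ↑g (g • v) = ↑h
    have h3 : act ((1 : G) : G ⧸ G') (n * (g • v)) = act ((1 : G) : G ⧸ G') m := by
      rw [← h_mul, ← hg]
      have := h_compat g 1 v
      rw [mul_one] at this
      rw [← this, show act ((1 : G) : G ⧸ G') v = ((g⁻¹ * h : G) : G ⧸ G') from hv,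
        hsmul, mul_inv_cancel_left, hh]
    have := hβ.injective h3
    have : m = n * (g • v) := this.symm
    subst this
    exact (QuotientGroup.mk_mul_of_mem n (hV g v hvV)).symm
  · -- surjective
    intro y
    induction y using Quotient.inductionOn with | h g =>
    obtain ⟨n, hn⟩ := hβ.surjective ((g : G) : G ⧸ G')
    refine ⟨↑n, ?_⟩
    show Subgroup.quotientMapOfLE hG'U (act ((1 : G) : G ⧸ G') n) = _
    rw [show act ((1 : G) : G ⧸ G') n = ((g : G) : G ⧸ G') from hn,
      Subgroup.quotientMapOfLE_apply_mk]
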